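/- arXiv:2208.13297 — 2 statements merged into one kernel-verified Lean document; each statement's English description precedes it below -/
import Mathlib

section
/- The semistrong chromatic index of the 5-prism (the Cartesian product of the 5-cycle C_5 with K_2) equals 8. -/
open SimpleGraph

variable {V : Type*}

/-- The set of endvertices of the edges in `M`. -/
def edgeVerts (M : Set (Sym2 V)) : Set V := {v | ∃ e ∈ M, v ∈ e}

/-- `M` is a matching of the simple graph `G`: a set of edges of `G`
that are pairwise disjoint. -/
def IsMatchingSet (G : SimpleGraph V) (M : Set (Sym2 V)) : Prop :=
  M ⊆ G.edgeSet ∧ ∀ e ∈ M, ∀ f ∈ M, e ≠ f → ∀ v : V, v ∈ e → v ∉ f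

/-- `M` is a semistrong matching of `G`: a matching such that every edge of `M`
has an endvertex of degree one in the subgraph of `G` induced by the
endvertices of the edges of `M`. -/
def IsSemistrongMatching (G : SimpleGraph V) (M : Set (Sym2 V)) : Prop :=
  IsMatchingSet G M ∧
    ∀ e ∈ M, ∃ u v : V, e = s(u, v) ∧ ∀ w ∈ edgeVerts M, G.Adj u w → w = v

/-- `G` has a semistrong edge-coloring with (at most) `k` colors: a proper
edge-coloring in which every color class is a semistrong matching. -/
def HasSemistrongEdgeColoring (G : SimpleGraph V) (k : ℕ) : Prop :=
  ∃ c : Sym2 V → ℕ, (∀ e ∈ G.edgeSet, c e < k) ∧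
    ∀ i : ℕ, IsSemistrongMatching G {e | e ∈ G.edgeSet ∧ c e = i}

/-- The semistrong chromatic index of `G`. -/
noncomputable def ssChromIdx (G : SimpleGraph V) : ℕ :=
  sInf {k | HasSemistrongEdgeColoring G k}

/-- The `5`-prism: the Cartesian (box) product of the cycle `C₅` with `K₂`. -/
def fivePrism : SimpleGraph (Fin 5 × Fin 2) :=
  SimpleGraph.cycleGraph 5 □ completeGraph (Fin 2)

/-! ### Auxiliary material -/

instance : DecidableRel (completeGraph (Fin 2)).Adj := fun a b =>
  inferInstanceAs (Decidable (a ≠ b))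

instance fpDec : DecidableRel fivePrism.Adj := fun _ _ =>
  decidable_of_iff _ (SimpleGraph.boxProd_adj).symm

lemma iss_iff (G : SimpleGraph V) (p : Sym2 V → Prop) :
    IsSemistrongMatching G {e | p e} ↔
    ((∀ e, p e → e ∈ G.edgeSet) ∧
      (∀ e, p e → ∀ f, p f → e ≠ f → ∀ v : V, v ∈ e → v ∉ f)) ∧
    ∀ e, p e → ∃ u v : V, e = s(u, v) ∧
      ∀ w, (∃ x, p x ∧ w ∈ x) → G.Adj u w → w = v := Iff.rfl

abbrev VV := Fin 5 × Fin 2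

def vx (i : Fin 5) (j : Fin 2) : VV := (i, j)

def edgeL : List (Sym2 VV) :=
  [s(vx 0 0, vx 0 1), s(vx 1 0, vx 1 1), s(vx 2 0, vx 2 1), s(vx 3 0, vx 3 1),
   s(vx 4 0, vx 4 1),
   s(vx 0 0, vx 1 0), s(vx 1 0, vx 2 0), s(vx 2 0, vx 3 0), s(vx 3 0, vx 4 0),
   s(vx 4 0, vx 0 0),
   s(vx 0 1, vx 1 1), s(vx 1 1, vx 2 1), s(vx 2 1, vx 3 1), s(vx 3 1, vx 4 1),
   s(vx 4 1, vx 0 1)]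

def cL : List ℕ := [0,1,2,3,4,5,6,0,1,2,3,4,5,6,7]

/-- The explicit semistrong `8`-edge-coloring. -/
def cc : Sym2 VV → ℕ := fun e => cL.getD (edgeL.idxOf e) 0

set_option maxRecDepth 10000 in
lemma upper_lt : ∀ e ∈ fivePrism.edgeSet, cc e < 8 := by decide

set_option synthInstance.maxSize 1000 in
set_option maxRecDepth 100000 in
set_option maxHeartbeats 1000000 in
lemma upper_ss : ∀ i < 8, IsSemistrongMatching fivePrism
    {e | e ∈ fivePrism.edgeSet ∧ cc e = i} := by
  intro i hi
  interval_cases i <;> (rw [iss_iff]; decide)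

lemma iss_empty (G : SimpleGraph V) : IsSemistrongMatching G (∅ : Set (Sym2 V)) :=
  ⟨⟨fun e he => absurd he (Set.notMem_empty e),
    fun e he => absurd he (Set.notMem_empty e)⟩,
   fun e he => absurd he (Set.notMem_empty e)⟩

lemma h8 : HasSemistrongEdgeColoring fivePrism 8 := by
  refine ⟨cc, upper_lt, fun i => ?_⟩
  rcases lt_or_ge i 8 with hi | hi
  · exact upper_ss i hi
  · have hne : {e | e ∈ fivePrism.edgeSet ∧ cc e = i} = (∅ : Set (Sym2 VV)) := by
      ext e
      simp only [Set.mem_setOf_eq, Set.mem_empty_iff_false, iff_false, not_and]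
      intro he hce
      exact absurd hce (Nat.ne_of_lt (lt_of_lt_of_le (upper_lt e he) hi))
    rw [hne]
    exact iss_empty _

/-! ### Lower bound -/

def pL : List (VV × VV) :=
  [(vx 0 0, vx 0 1), (vx 1 0, vx 1 1), (vx 2 0, vx 2 1), (vx 3 0, vx 3 1),
   (vx 4 0, vx 4 1),
   (vx 0 0, vx 1 0), (vx 1 0, vx 2 0), (vx 2 0, vx 3 0), (vx 3 0, vx 4 0),
   (vx 4 0, vx 0 0),
   (vx 0 1, vx 1 1), (vx 1 1, vx 2 1), (vx 2 1, vx 3 1), (vx 3 1, vx 4 1),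
   (vx 4 1, vx 0 1)]

def adjB (u w : VV) : Bool :=
  (u.1 == w.1 && !(u.2 == w.2)) || (u.2 == w.2 && (u.1 - w.1 == 1 || w.1 - u.1 == 1))

set_option maxRecDepth 10000 in
lemma adj_iff : ∀ u w : VV, fivePrism.Adj u w ↔ adjB u w = true := by decide

def vertsOf (e f g : VV × VV) : List VV := [e.1, e.2, f.1, f.2, g.1, g.2]

def pdj' (a b : VV × VV) : Prop := a.1 ≠ b.1 ∧ a.1 ≠ b.2 ∧ a.2 ≠ b.1 ∧ a.2 ≠ b.2

def pend' (x e f g : VV × VV) : Prop :=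
  (∀ w ∈ vertsOf e f g, adjB x.1 w = true → w = x.2) ∨
  (∀ w ∈ vertsOf e f g, adjB x.2 w = true → w = x.1)

def SS3' (e f g : VV × VV) : Prop :=
  pdj' e f ∧ pdj' e g ∧ pdj' f g ∧ pend' e e f g ∧ pend' f e f g ∧ pend' g e f g

instance (a b : VV × VV) : Decidable (pdj' a b) := by unfold pdj'; infer_instance
instance (x e f g : VV × VV) : Decidable (pend' x e f g) := by
  unfold pend'; infer_instance
instance (e f g : VV × VV) : Decidable (SS3' e f g) := by unfold SS3'; infer_instance

set_option maxRecDepth 100000 in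
set_option maxHeartbeats 1000000 in
lemma no_ss3' : ∀ e ∈ pL, ∀ f ∈ pL, ∀ g ∈ pL, ¬ SS3' e f g := by decide

set_option maxRecDepth 10000 in
lemma edge_decomp : ∀ e ∈ fivePrism.edgeSet, ∃ p ∈ pL, e = s(p.1, p.2) := by decide

lemma pdj'_of {a b : Sym2 VV} {p1 p2 q1 q2 : VV} (ha : a = s(p1, p2))
    (hb : b = s(q1, q2)) (h : ∀ v : VV, v ∈ a → v ∉ b) : pdj' (p1, p2) (q1, q2) := by
  subst ha; subst hb
  refine ⟨fun hv => ?_, fun hv => ?_, fun hv => ?_, fun hv => ?_⟩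
  · exact h p1 (by simp) (by simp [show p1 = q1 from hv])
  · exact h p1 (by simp) (by simp [show p1 = q2 from hv])
  · exact h p2 (by simp) (by simp [show p2 = q1 from hv])
  · exact h p2 (by simp) (by simp [show p2 = q2 from hv])

lemma pend'_of {M : Set (Sym2 VV)} (hM : IsSemistrongMatching fivePrism M)
    {x e f g : Sym2 VV} {px1 px2 pe1 pe2 pf1 pf2 pg1 pg2 : VV}
    (hxM : x ∈ M) (heM : e ∈ M) (hfM : f ∈ M) (hgM : g ∈ M)
    (hx : x = s(px1, px2)) (he : e = s(pe1, pe2))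
    (hf : f = s(pf1, pf2)) (hg : g = s(pg1, pg2)) :
    pend' (px1, px2) (pe1, pe2) (pf1, pf2) (pg1, pg2) := by
  obtain ⟨u, v, hxuv, hw⟩ := hM.2 x hxM
  have hvert : ∀ w ∈ vertsOf (pe1, pe2) (pf1, pf2) (pg1, pg2), w ∈ edgeVerts M := by
    intro w hwv
    simp only [vertsOf, List.mem_cons, List.not_mem_nil, or_false] at hwv
    rcases hwv with h | h | h | h | h | h <;> subst h
    · exact ⟨e, heM, by simp [he]⟩
    · exact ⟨e, heM, by simp [he]⟩
    · exact ⟨f, hfM, by simp [hf]⟩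
    · exact ⟨f, hfM, by simp [hf]⟩
    · exact ⟨g, hgM, by simp [hg]⟩
    · exact ⟨g, hgM, by simp [hg]⟩
  rw [hx] at hxuv
  rcases Sym2.eq_iff.1 hxuv with ⟨h1, h2⟩ | ⟨h1, h2⟩
  · left
    intro w hwv hadj
    show w = px2
    rw [h2]
    exact hw w (hvert w hwv) (h1 ▸ (adj_iff px1 w).2 hadj)
  · right
    intro w hwv hadj
    show w = px1
    rw [h1]
    exact hw w (hvert w hwv) (h2 ▸ (adj_iff px2 w).2 hadj)

lemma lower {k : ℕ} (h : HasSemistrongEdgeColoring fivePrism k) : 8 ≤ k := by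
  by_contra hlt
  push_neg at hlt
  obtain ⟨c, hc, hss⟩ := h
  have hmap : ∀ e ∈ fivePrism.edgeFinset, c e ∈ Finset.range 7 := fun e he =>
    Finset.mem_range.2 (lt_of_lt_of_le (hc e (mem_edgeFinset.1 he)) (by omega))
  have hcard : (Finset.range 7).card * 2 < fivePrism.edgeFinset.card := by
    have h15 : fivePrism.edgeFinset.card = 15 := by decide
    rw [h15, Finset.card_range]
    norm_num
  obtain ⟨i, _, hi⟩ :=
    Finset.exists_lt_card_fiber_of_mul_lt_card_of_maps_to hmap hcard
  obtain ⟨t, hts, ht3⟩ := Finset.exists_subset_card_eq (show 3 ≤ _ from hi)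
  obtain ⟨e, f, g, hef, heg, hfg, rfl⟩ := Finset.card_eq_three.1 ht3
  have hmem : ∀ x ∈ ({e, f, g} : Finset (Sym2 VV)),
      x ∈ fivePrism.edgeSet ∧ c x = i := by
    intro x hx
    have := Finset.mem_filter.1 (hts hx)
    exact ⟨mem_edgeFinset.1 this.1, this.2⟩
  set M : Set (Sym2 VV) := {x | x ∈ fivePrism.edgeSet ∧ c x = i} with hMdef
  have hcl : IsSemistrongMatching fivePrism M := hss i
  have heM : e ∈ M := hmem e (by simp)
  have hfM : f ∈ M := hmem f (by simp)
  have hgM : g ∈ M := hmem g (by simp)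
  obtain ⟨⟨pe1, pe2⟩, hpeL, hpe⟩ := edge_decomp e (hmem e (by simp)).1
  obtain ⟨⟨pf1, pf2⟩, hpfL, hpf⟩ := edge_decomp f (hmem f (by simp)).1
  obtain ⟨⟨pg1, pg2⟩, hpgL, hpg⟩ := edge_decomp g (hmem g (by simp)).1
  have hdisj := hcl.1.2
  refine no_ss3' _ hpeL _ hpfL _ hpgL ?_
  exact ⟨pdj'_of hpe hpf (hdisj e heM f hfM hef),
    pdj'_of hpe hpg (hdisj e heM g hgM heg),
    pdj'_of hpf hpg (hdisj f hfM g hgM hfg),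
    pend'_of hcl heM heM hfM hgM hpe hpe hpf hpg,
    pend'_of hcl hfM heM hfM hgM hpf hpe hpf hpg,
    pend'_of hcl hgM heM hfM hgM hpg hpe hpf hpg⟩

/-- The semistrong chromatic index of the `5`-prism equals `8`. -/
theorem ssChromIdx_fivePrism : ssChromIdx fivePrism = 8 := by
  refine le_antisymm (Nat.sInf_le h8) (le_csInf ⟨8, h8⟩ fun k hk => lower hk)
end

section
/- For all integers 0 ≤ k ≤ ℓ ≤ n, the strong chromatic index and the semistrong chromatic index of the subset graph S_n(k,ℓ) are both equal to the binomial coefficient C(n, ℓ−k). -/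
open SimpleGraph

variable {V : Type*}

/-- `M` is a strong (induced) matching of `G`: a matching such that the subgraph
of `G` induced by the endvertices of `M` contains no edges other than those of `M`. -/
def IsStrongMatching (G : SimpleGraph V) (M : Set (Sym2 V)) : Prop :=
  IsMatchingSet G M ∧
    ∀ u ∈ edgeVerts M, ∀ w ∈ edgeVerts M, G.Adj u w → s(u, w) ∈ M

/-- `G` has a strong edge-coloring with (at most) `k` colors. -/
def HasStrongEdgeColoring (G : SimpleGraph V) (k : ℕ) : Prop :=
  ∃ c : Sym2 V → ℕ, (∀ e ∈ G.edgeSet, c e < k) ∧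
    ∀ i : ℕ, IsStrongMatching G {e | e ∈ G.edgeSet ∧ c e = i}

/-- The strong chromatic index of `G`. -/
noncomputable def strongChromIdx (G : SimpleGraph V) : ℕ :=
  sInf {k | HasStrongEdgeColoring G k}

/-- The subset graph `S_n(k,ℓ)`: the bipartite graph whose two vertex parts are
the `k`-element subsets and the `ℓ`-element subsets of an `n`-element set, with
a `k`-subset adjacent to an `ℓ`-subset iff one contains the other. -/
def subsetGraph (n k l : ℕ) :
    SimpleGraph ({s : Finset (Fin n) // s.card = k} ⊕ {s : Finset (Fin n) // s.card = l}) :=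
  SimpleGraph.fromRel (fun x y =>
    ∃ s t, x = Sum.inl s ∧ y = Sum.inr t ∧ (s.1 ⊆ t.1 ∨ t.1 ⊆ s.1))


open Finset
section Proofs

section DetKM

variable {k m : ℕ}

noncomputable def detKM (k m : ℕ) (f : Fin k → (Fin (k+m) → ℝ)) (g : Fin m → (Fin (k+m) → ℝ)) : ℝ :=
  Matrix.det (Matrix.of fun r c => Sum.elim f g (finSumFinEquiv.symm r) c)

lemma detKM_eq_zero_inl_inr {f : Fin k → (Fin (k+m) → ℝ)} {g : Fin m → (Fin (k+m) → ℝ)}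
    (p : Fin k) (q : Fin m) (h : f p = g q) : detKM k m f g = 0 := by
  apply Matrix.det_zero_of_row_eq (i := finSumFinEquiv (Sum.inl p)) (j := finSumFinEquiv (Sum.inr q))
  · apply finSumFinEquiv.injective.ne_iff.2; simp
  · funext c
    simp [Matrix.of_apply, h]

lemma detKM_eq_zero_inl_inl {f : Fin k → (Fin (k+m) → ℝ)} {g : Fin m → (Fin (k+m) → ℝ)}
    (p p' : Fin k) (hne : p ≠ p') (h : f p = f p') : detKM k m f g = 0 := by
  apply Matrix.det_zero_of_row_eq (i := finSumFinEquiv (Sum.inl p)) (j := finSumFinEquiv (Sum.inl p'))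
  · apply finSumFinEquiv.injective.ne_iff.2; simp [hne]
  · funext c
    simp [Matrix.of_apply, h]

lemma detKM_vandermonde_ne_zero {n : ℕ} (a : Fin k → Fin n) (b : Fin m → Fin n)
    (hinj : Function.Injective (Sum.elim a b)) :
    detKM k m (fun p c => ((a p : ℕ) : ℝ) ^ (c : ℕ)) (fun q c => ((b q : ℕ) : ℝ) ^ (c : ℕ)) ≠ 0 := by
  have hmat : (Matrix.of fun (r c : Fin (k+m)) => Sum.elim (fun p (c : Fin (k+m)) => ((a p : ℕ) : ℝ) ^ (c : ℕ))
      (fun q (c : Fin (k+m)) => ((b q : ℕ) : ℝ) ^ (c : ℕ)) (finSumFinEquiv.symm r) c)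
      = Matrix.vandermonde (fun r => ((Sum.elim a b (finSumFinEquiv.symm r) : Fin n) : ℝ)) := by
    funext r c
    cases h : finSumFinEquiv.symm r <;> simp [Matrix.vandermonde, h]
  rw [detKM, hmat, Matrix.det_vandermonde]
  apply Finset.prod_ne_zero_iff.2
  intro i _
  apply Finset.prod_ne_zero_iff.2
  intro j hj
  have hij : i ≠ j := ne_of_lt (Finset.mem_Ioi.1 hj)
  have : Sum.elim a b (finSumFinEquiv.symm j) ≠ Sum.elim a b (finSumFinEquiv.symm i) := by
    intro h
    exact hij (finSumFinEquiv.symm.injective (hinj h)).symm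
  have : ((Sum.elim a b (finSumFinEquiv.symm j) : Fin n) : ℝ) ≠
      ((Sum.elim a b (finSumFinEquiv.symm i) : Fin n) : ℝ) := by
    intro h
    apply this
    exact Fin.val_injective (Nat.cast_injective h)
  exact sub_ne_zero.2 this


/-- standard basis row -/
def deltaRow (c : Fin (k+m)) : Fin (k+m) → ℝ := fun j => if c = j then 1 else 0

/-- det as multilinear map in the `Fin k ⊕ Fin m` indexed rows -/
noncomputable def detML (k m : ℕ) :
    MultilinearMap ℝ (fun _ : Fin k ⊕ Fin m => (Fin (k+m) → ℝ)) ℝ :=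
  (Matrix.detRowAlternating : (Fin (k+m) → ℝ) [⋀^Fin (k+m)]→ₗ[ℝ] ℝ).toMultilinearMap.domDomCongr
    finSumFinEquiv.symm

lemma detML_apply (f : Fin k → (Fin (k+m) → ℝ)) (g : Fin m → (Fin (k+m) → ℝ)) :
    detML k m (Sum.elim f g) = detKM k m f g := rfl

lemma detKM_expand (f : Fin k → (Fin (k+m) → ℝ)) (g : Fin m → (Fin (k+m) → ℝ)) :
    detKM k m f g =
      ∑ ϕ : Fin k → Fin (k+m),
        (∏ p, f p (ϕ p)) * detKM k m (fun p => deltaRow (ϕ p)) g := by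
  classical
  set A : Fin k ⊕ Fin m → Finset (Fin (k+m)) :=
    Sum.elim (fun _ => Finset.univ) (fun q => {finSumFinEquiv (Sum.inr q)}) with hA
  set G : (Fin k ⊕ Fin m) → Fin (k+m) → (Fin (k+m) → ℝ) :=
    Sum.elim (fun p c => f p c • deltaRow c) (fun q _ => g q) with hG
  have h1 : Sum.elim f g = fun t => ∑ c ∈ A t, G t c := by
    funext t
    cases t with
    | inl p =>
      simp only [hA, hG, Sum.elim_inl]
      exact pi_eq_sum_univ (f p)
    | inr q => simp [hA, hG]
  have h2 : detKM k m f g = ∑ r ∈ Fintype.piFinset A, detML k m (fun t => G t (r t)) := by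
    rw [← detML_apply, h1]
    exact (detML k m).map_sum_finset G A
  rw [h2]
  apply Finset.sum_nbij' (i := fun r (p : Fin k) => r (Sum.inl p))
    (j := fun ϕ => Sum.elim ϕ (fun q => finSumFinEquiv (Sum.inr q)))
  · intro a _; exact Finset.mem_univ _
  · intro ϕ _
    rw [Fintype.mem_piFinset]
    intro t
    cases t <;> simp [hA]
  · intro r hr
    rw [Fintype.mem_piFinset] at hr
    funext t
    cases t with
    | inl p => simp
    | inr q =>
      have := hr (Sum.inr q)
      simp only [hA, Sum.elim_inr, Finset.mem_singleton] at this
      simpa using this.symm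
  · intro ϕ _; funext p; simp
  · intro r hr
    have hrow : (fun t => G t (r t)) =
        fun t => (Sum.elim (fun p => f p (r (Sum.inl p))) (fun _ => (1:ℝ)) t) •
          (Sum.elim (fun p => deltaRow (r (Sum.inl p))) g t) := by
      funext t
      cases t with
      | inl p => simp [hG]
      | inr q => simp [hG]
    rw [hrow, (detML k m).map_smul_univ, detML_apply]
    rw [Fintype.prod_sum_type]
    simp [smul_eq_mul]

lemma detKM_delta_perm (σ : Equiv.Perm (Fin k)) (ψ : Fin k → Fin (k+m))
    (g : Fin m → (Fin (k+m) → ℝ)) :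
    detKM k m (fun p => deltaRow (ψ (σ p))) g =
      (Equiv.Perm.sign σ : ℝ) * detKM k m (fun p => deltaRow (ψ p)) g := by
  classical
  set τ : Equiv.Perm (Fin (k+m)) :=
    Equiv.permCongr finSumFinEquiv (Equiv.sumCongr σ (Equiv.refl (Fin m))) with hτ
  have hmat : (Matrix.of fun r c => Sum.elim (fun p => deltaRow (ψ (σ p))) g
      (finSumFinEquiv.symm r) c) =
      (Matrix.of fun r c => Sum.elim (fun p => deltaRow (ψ p)) g
        (finSumFinEquiv.symm r) c).submatrix τ id := by
    funext r c
    simp only [Matrix.submatrix_apply, Matrix.of_apply, id_eq, hτ, Equiv.permCongr_apply,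
      Equiv.symm_apply_apply]
    cases h : finSumFinEquiv.symm r with
    | inl p => simp [h]
    | inr q => simp [h]
  rw [detKM, hmat, Matrix.det_permute]
  have hsign : Equiv.Perm.sign τ = Equiv.Perm.sign σ := by
    rw [hτ, Equiv.Perm.sign_permCongr, Equiv.Perm.sign_sumCongr]
    simp
  rw [hsign, detKM]
end DetKM

section Bound

variable {n k m : ℕ} {ι : Type*} [Fintype ι] [DecidableEq ι]

lemma card_le_choose_of_LR (A B : ι → Finset (Fin n))
    (hA : ∀ i, (A i).card = k)
    (hBc : ∀ i, ((Finset.univ : Finset (Fin n)) \ B i).card = m)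
    (hAB : ∀ i, A i ⊆ B i)
    (hLR : ∀ i, (∀ j, A i ⊆ B j → j = i) ∨ (∀ j, A j ⊆ B i → j = i)) :
    Fintype.card ι ≤ (k + m).choose k := by
  classical
  -- enumerations of the sets
  set a : ∀ i : ι, Fin k → Fin n := fun i => ⇑((A i).orderEmbOfFin (hA i)) with ha
  set b : ∀ i : ι, Fin m → Fin n := fun i =>
    ⇑(((Finset.univ : Finset (Fin n)) \ B i).orderEmbOfFin (hBc i)) with hb
  have ha_mem : ∀ i p, a i p ∈ A i := fun i p => Finset.orderEmbOfFin_mem _ _ _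
  have hb_mem : ∀ i q, b i q ∈ (Finset.univ : Finset (Fin n)) \ B i := fun i q =>
    Finset.orderEmbOfFin_mem _ _ _
  have ha_surj : ∀ i x, x ∈ A i → ∃ p, a i p = x := by
    intro i x hx
    have : x ∈ Set.range (a i) := by
      rw [ha]; rw [Finset.range_orderEmbOfFin]; exact_mod_cast hx
    exact this
  have hb_surj : ∀ i x, x ∈ (Finset.univ : Finset (Fin n)) \ B i → ∃ q, b i q = x := by
    intro i x hx
    have : x ∈ Set.range (b i) := by
      rw [hb]; rw [Finset.range_orderEmbOfFin]; exact_mod_cast hx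
    exact this
  set vr : Fin n → Fin (k+m) → ℝ := fun x c => ((x : ℕ) : ℝ) ^ (c : ℕ) with hvr
  set u : ι → ι → ℝ := fun i j => detKM k m (fun p => vr (a i p)) (fun q => vr (b j q)) with hu
  -- vanishing off-diagonal entries
  have hvanish : ∀ i j, ¬ A i ⊆ B j → u i j = 0 := by
    intro i j hns
    obtain ⟨x, hxA, hxB⟩ := Finset.not_subset.1 hns
    obtain ⟨p, hp⟩ := ha_surj i x hxA
    obtain ⟨q, hq⟩ := hb_surj j x (Finset.mem_sdiff.2 ⟨Finset.mem_univ _, hxB⟩)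
    apply detKM_eq_zero_inl_inr p q
    rw [hp, hq]
  -- nonzero diagonal entries
  have hdiag : ∀ i, u i i ≠ 0 := by
    intro i
    apply detKM_vandermonde_ne_zero (a i) (b i)
    intro t t' htt
    cases t with
    | inl p =>
      cases t' with
      | inl p' =>
        simp only [Sum.elim_inl] at htt
        exact congrArg Sum.inl (((A i).orderEmbOfFin (hA i)).injective htt)
      | inr q' =>
        exfalso
        simp only [Sum.elim_inl, Sum.elim_inr] at htt
        have h1 := hAB i (ha_mem i p)
        have h2 := (Finset.mem_sdiff.1 (hb_mem i q')).2
        rw [htt] at h1; exact h2 h1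
    | inr q =>
      cases t' with
      | inl p' =>
        exfalso
        simp only [Sum.elim_inl, Sum.elim_inr] at htt
        have h1 := hAB i (ha_mem i p')
        have h2 := (Finset.mem_sdiff.1 (hb_mem i q)).2
        rw [← htt] at h1; exact h2 h1
      | inr q' =>
        simp only [Sum.elim_inr] at htt
        exact congrArg Sum.inr
          ((((Finset.univ : Finset (Fin n)) \ B i).orderEmbOfFin (hBc i)).injective htt)
  -- linear independence of the rows
  have hli : LinearIndependent ℝ u := by
    rw [Fintype.linearIndependent_iff]
    intro g hg
    have hcoord : ∀ i, ∑ j, g j * u j i = 0 := by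
      intro i
      have := congrFun hg i
      simpa using this
    have hR : ∀ i, (∀ j, A j ⊆ B i → j = i) → g i = 0 := by
      intro i hRi
      have h0 := hcoord i
      rw [Finset.sum_eq_single i] at h0
      · exact (mul_eq_zero.1 h0).resolve_right (hdiag i)
      · intro j _ hji
        have : ¬ A j ⊆ B i := fun hs => hji (hRi j hs)
        rw [hvanish j i this, mul_zero]
      · intro h; exact absurd (Finset.mem_univ i) h
    intro i
    rcases hLR i with hL | hRi
    · have h0 := hcoord i
      rw [Finset.sum_eq_single i] at h0
      · exact (mul_eq_zero.1 h0).resolve_right (hdiag i)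
      · intro j _ hji
        rcases hLR j with hLj | hRj
        · have : ¬ A j ⊆ B i := fun hs => hji (hLj i hs).symm
          rw [hvanish j i this, mul_zero]
        · rw [hR j hRj, zero_mul]
      · intro h; exact absurd (Finset.mem_univ i) h
    · exact hR i hRi
  -- the span generators
  set Wv : (Fin k → Fin (k+m)) → ι → ℝ :=
    fun ϕ j => detKM k m (fun p => deltaRow (ϕ p)) (fun q => vr (b j q)) with hWv
  set gfun : Finset (Fin (k+m)) → ι → ℝ :=
    fun S => if h : S.card = k then Wv ⇑(S.orderEmbOfFin h) else 0 with hgfun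
  set genSet : Finset (ι → ℝ) :=
    (Finset.powersetCard k (Finset.univ : Finset (Fin (k+m)))).image gfun with hgen
  have hWspan : ∀ ϕ, Wv ϕ ∈ Submodule.span ℝ (genSet : Set (ι → ℝ)) := by
    intro ϕ
    by_cases hinj : Function.Injective ϕ
    · set S : Finset (Fin (k+m)) := Finset.image ϕ Finset.univ with hS
      have hScard : S.card = k := by
        rw [hS, Finset.card_image_of_injective _ hinj, Finset.card_univ, Fintype.card_fin]
      set ψ : Fin k → Fin (k+m) := ⇑(S.orderEmbOfFin hScard) with hψ
      have hrange : Set.range ϕ = (S : Set (Fin (k+m))) := by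
        rw [hS, Finset.coe_image, Finset.coe_univ, Set.image_univ]
      set e1 : Fin k ≃ (S : Set (Fin (k+m))) :=
        (Equiv.ofInjective ϕ hinj).trans (Equiv.setCongr hrange) with he1
      set σ : Equiv.Perm (Fin k) := e1.trans (S.orderIsoOfFin hScard).toEquiv.symm with hσ
      have hϕψ : ∀ p, ψ (σ p) = ϕ p := by
        intro p
        have : (S.orderIsoOfFin hScard) (σ p) = e1 p := by
          rw [hσ]; simp
        have hval := congrArg Subtype.val this
        rw [Finset.coe_orderIsoOfFin_apply] at hval
        rw [hψ, hval, he1]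
        rfl
      have hperm : Wv ϕ = ((Equiv.Perm.sign σ : ℤ) : ℝ) • Wv ψ := by
        funext j
        have := detKM_delta_perm σ ψ (fun q => vr (b j q))
        have heq : (fun p => deltaRow (ψ (σ p))) = fun p => deltaRow (ϕ p) := by
          funext p; rw [hϕψ]
        rw [heq] at this
        simpa [hWv, smul_eq_mul] using this
      have hmem : Wv ψ ∈ genSet := by
        rw [hgen]
        apply Finset.mem_image.2
        refine ⟨S, ?_, ?_⟩
        · exact Finset.mem_powersetCard.2 ⟨Finset.subset_univ _, hScard⟩
        · exact dif_pos hScard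
      rw [hperm]
      exact Submodule.smul_mem _ _ (Submodule.subset_span hmem)
    · have : Wv ϕ = 0 := by
        rw [Function.not_injective_iff] at hinj
        obtain ⟨p, p', hval, hne⟩ := hinj
        funext j
        have : detKM k m (fun p0 => deltaRow (ϕ p0)) (fun q => vr (b j q)) = 0 := by
          apply detKM_eq_zero_inl_inl p p' hne
          rw [hval]
        simpa [hWv] using this
      rw [this]
      exact Submodule.zero_mem _
  have huspan : ∀ i, u i ∈ Submodule.span ℝ (genSet : Set (ι → ℝ)) := by
    intro i
    have hexp : u i = ∑ ϕ : Fin k → Fin (k+m), (∏ p, vr (a i p) (ϕ p)) • Wv ϕ := by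
      funext j
      rw [hu]
      have := detKM_expand (fun p => vr (a i p)) (fun q => vr (b j q))
      simpa [hWv, smul_eq_mul] using this
    rw [hexp]
    exact Submodule.sum_mem _ fun ϕ _ => Submodule.smul_mem _ _ (hWspan ϕ)
  -- conclude
  have hcard : (Cardinal.mk ι) ≤ Fintype.card (genSet : Set (ι → ℝ)) :=
    linearIndependent_le_span' u hli _ (fun x hx => by
      obtain ⟨i, rfl⟩ := hx
      exact huspan i)
  have hcard2 : Fintype.card ι ≤ Fintype.card (genSet : Set (ι → ℝ)) := by
    rw [← Nat.cast_le (α := Cardinal), ← Cardinal.mk_fintype ι]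
    exact_mod_cast hcard
  calc Fintype.card ι ≤ Fintype.card (genSet : Set (ι → ℝ)) := hcard2
    _ = genSet.card := by simp
    _ ≤ (Finset.powersetCard k (Finset.univ : Finset (Fin (k+m)))).card :=
        Finset.card_image_le
    _ = (k + m).choose k := by
        rw [Finset.card_powersetCard, Finset.card_univ, Fintype.card_fin]

end Bound

-- new material
section Graph

variable {n k l : ℕ}

lemma subsetGraph_adj_inl_inr (hkl : k ≤ l) (A : {s : Finset (Fin n) // s.card = k})
    (B : {s : Finset (Fin n) // s.card = l}) :
    (subsetGraph n k l).Adj (Sum.inl A) (Sum.inr B) ↔ A.1 ⊆ B.1 := by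
  rw [subsetGraph, SimpleGraph.fromRel_adj]
  constructor
  · rintro ⟨-, h | h⟩
    · obtain ⟨s, t, hs, ht, hst⟩ := h
      obtain rfl : A = s := Sum.inl.inj hs
      obtain rfl : B = t := Sum.inr.inj ht
      rcases hst with h | h
      · exact h
      · have heq : B.1 = A.1 := Finset.eq_of_subset_of_card_le h (by rw [A.2, B.2]; exact hkl)
        exact le_of_eq heq.symm
    · obtain ⟨s, t, hs, _, _⟩ := h
      exact absurd hs (by simp)
  · intro h
    exact ⟨by simp, Or.inl ⟨A, B, rfl, rfl, Or.inl h⟩⟩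

lemma subsetGraph_adj_shape {x y : ({s : Finset (Fin n) // s.card = k} ⊕ {s : Finset (Fin n) // s.card = l})}
    (h : (subsetGraph n k l).Adj x y) :
    (∃ A B, x = Sum.inl A ∧ y = Sum.inr B) ∨ (∃ A B, x = Sum.inr B ∧ y = Sum.inl A) := by
  rw [subsetGraph, SimpleGraph.fromRel_adj] at h
  rcases h.2 with ⟨s, t, hs, ht, _⟩ | ⟨s, t, hs, ht, _⟩
  · exact Or.inl ⟨s, t, hs, ht⟩
  · exact Or.inr ⟨s, t, ht, hs⟩

lemma subsetGraph_edge_form (hkl : k ≤ l) {e : Sym2 _}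
    (he : e ∈ (subsetGraph n k l).edgeSet) :
    ∃ A B, e = s(Sum.inl A, Sum.inr B) ∧ A.1 ⊆ B.1 := by
  induction e using Sym2.ind with
  | _ x y =>
    have hadj : (subsetGraph n k l).Adj x y := he
    rcases subsetGraph_adj_shape hadj with ⟨A, B, rfl, rfl⟩ | ⟨A, B, rfl, rfl⟩
    · exact ⟨A, B, rfl, (subsetGraph_adj_inl_inr hkl A B).1 hadj⟩
    · exact ⟨A, B, Sym2.eq_swap, (subsetGraph_adj_inl_inr hkl A B).1 hadj.symm⟩

/-- encoding of (l-k)-subsets as numbers below `n.choose (l-k)` -/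
noncomputable def encD (n d : ℕ) (D : Finset (Fin n)) : ℕ :=
  if h : D.card = d then ((Fintype.equivFin {s : Finset (Fin n) // s.card = d}) ⟨D, h⟩ : ℕ) else 0

lemma encD_lt (n d : ℕ) {D : Finset (Fin n)} (h : D.card = d) : encD n d D < n.choose d := by
  rw [encD, dif_pos h]
  have h1 := ((Fintype.equivFin {s : Finset (Fin n) // s.card = d}) ⟨D, h⟩).2
  have h2 : Fintype.card {s : Finset (Fin n) // s.card = d} = n.choose d := by
    rw [Fintype.card_finset_len, Fintype.card_fin]
  rw [← h2]; exact h1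

lemma encD_inj (n d : ℕ) {D D' : Finset (Fin n)} (h : D.card = d) (h' : D'.card = d)
    (he : encD n d D = encD n d D') : D = D' := by
  simp only [encD, dif_pos h, dif_pos h'] at he
  have := (Fintype.equivFin {s : Finset (Fin n) // s.card = d}).injective (Fin.val_injective he)
  exact congrArg Subtype.val this

/-- the strong edge coloring of the subset graph by differences -/
noncomputable def subsetCol (n k l : ℕ) :
    Sym2 ({s : Finset (Fin n) // s.card = k} ⊕ {s : Finset (Fin n) // s.card = l}) → ℕ :=
  Sym2.lift ⟨fun x y =>
    match x, y with
    | Sum.inl A, Sum.inr B => encD n (l-k) (B.1 \ A.1)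
    | Sum.inr B, Sum.inl A => encD n (l-k) (B.1 \ A.1)
    | _, _ => 0,
    by intro x y; cases x <;> cases y <;> rfl⟩

lemma subsetCol_mk (A : {s : Finset (Fin n) // s.card = k}) (B : {s : Finset (Fin n) // s.card = l}) :
    subsetCol n k l s(Sum.inl A, Sum.inr B) = encD n (l-k) (B.1 \ A.1) := rfl

end Graph

section Upper

variable {n k l : ℕ}

lemma subsetCol_lt (hkl : k ≤ l) {e} (he : e ∈ (subsetGraph n k l).edgeSet) :
    subsetCol n k l e < n.choose (l - k) := by
  obtain ⟨A, B, rfl, hAB⟩ := subsetGraph_edge_form hkl he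
  rw [subsetCol_mk]
  apply encD_lt
  rw [Finset.card_sdiff_of_subset hAB, A.2, B.2]

lemma sdiff_card (hAB : ∀ (A : {s : Finset (Fin n) // s.card = k})
    (B : {s : Finset (Fin n) // s.card = l}), True) : True := trivial

lemma subsetGraph_strong_classes (hkl : k ≤ l) (i : ℕ) :
    IsStrongMatching (subsetGraph n k l)
      {e | e ∈ (subsetGraph n k l).edgeSet ∧ subsetCol n k l e = i} := by
  set G := subsetGraph n k l with hG
  set M := {e | e ∈ G.edgeSet ∧ subsetCol n k l e = i} with hM
  -- common difference for members
  have hform : ∀ e ∈ M, ∃ A B, e = s(Sum.inl A, Sum.inr B) ∧ A.1 ⊆ B.1 ∧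
      encD n (l-k) (B.1 \ A.1) = i := by
    intro e he
    obtain ⟨A, B, rfl, hAB⟩ := subsetGraph_edge_form hkl he.1
    exact ⟨A, B, rfl, hAB, he.2⟩
  have hDeq : ∀ (A A' : {s : Finset (Fin n) // s.card = k})
      (B B' : {s : Finset (Fin n) // s.card = l}), A.1 ⊆ B.1 → A'.1 ⊆ B'.1 →
      encD n (l-k) (B.1 \ A.1) = i → encD n (l-k) (B'.1 \ A'.1) = i →
      B.1 \ A.1 = B'.1 \ A'.1 := by
    intro A A' B B' h1 h2 e1 e2
    apply encD_inj n (l-k)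
    · rw [Finset.card_sdiff_of_subset h1, A.2, B.2]
    · rw [Finset.card_sdiff_of_subset h2, A'.2, B'.2]
    · rw [e1, e2]
  -- determination lemmas
  have hBdet : ∀ (A : {s : Finset (Fin n) // s.card = k})
      (B : {s : Finset (Fin n) // s.card = l}), A.1 ⊆ B.1 → A.1 ∪ (B.1 \ A.1) = B.1 :=
    fun A B h => Finset.union_sdiff_of_subset h
  have hAdet : ∀ (A : {s : Finset (Fin n) // s.card = k})
      (B : {s : Finset (Fin n) // s.card = l}), A.1 ⊆ B.1 → B.1 \ (B.1 \ A.1) = A.1 := by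
    intro A B h
    rw [Finset.sdiff_sdiff_self_left, Finset.inter_eq_right.2 h]
  constructor
  · constructor
    · exact fun e he => he.1
    · intro e he f hf hef v hv hvf
      obtain ⟨A, B, rfl, hAB, hcA⟩ := hform e he
      obtain ⟨A', B', rfl, hAB', hcA'⟩ := hform f hf
      have hD := hDeq A A' B B' hAB hAB' hcA hcA'
      rw [Sym2.mem_iff] at hv hvf
      apply hef
      rcases hv with rfl | rfl
      · rcases hvf with hv' | hv'
        · have hAA : A = A' := Sum.inl.inj hv'
          have hBB : B = B' := by
            apply Subtype.ext
            rw [← hBdet A B hAB, ← hBdet A' B' hAB', hD, hAA]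
          rw [hAA, hBB]
        · exact absurd hv' (by simp)
      · rcases hvf with hv' | hv'
        · exact absurd hv' (by simp)
        · have hBB : B = B' := Sum.inr.inj hv'
          have hAA : A = A' := by
            apply Subtype.ext
            rw [← hAdet A B hAB, ← hAdet A' B' hAB', hD, hBB]
          rw [hAA, hBB]
  · -- strong condition
    intro u hu w hw hadj
    -- key claim
    have key : ∀ (A : {s : Finset (Fin n) // s.card = k})
        (B' : {s : Finset (Fin n) // s.card = l}),
        Sum.inl A ∈ edgeVerts M → Sum.inr B' ∈ edgeVerts M → A.1 ⊆ B'.1 →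
        s(Sum.inl A, Sum.inr B') ∈ M := by
      intro A B' huA hwB hsub
      obtain ⟨e1, he1, hue⟩ := huA
      obtain ⟨e2, he2, hwe⟩ := hwB
      obtain ⟨A1, B1, rfl, h1, hc1⟩ := hform e1 he1
      obtain ⟨A2, B2, rfl, h2, hc2⟩ := hform e2 he2
      rw [Sym2.mem_iff] at hue hwe
      have hA1 : A1 = A := by
        rcases hue with h | h
        · exact (Sum.inl.inj h).symm
        · exact absurd h (by simp)
      have hB2 : B2 = B' := by
        rcases hwe with h | h
        · exact absurd h (by simp)
        · exact (Sum.inr.inj h).symm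
      rw [hA1] at h1 hc1
      rw [hB2] at h2 hc2 he2
      have hD := hDeq A A2 B1 B' h1 h2 hc1 hc2
      -- A ⊆ A2
      have hA2 : A.1 = A2.1 := by
        apply Finset.eq_of_subset_of_card_le
        · intro x hx
          have hxB : x ∈ B'.1 := hsub hx
          have hxD : x ∉ B'.1 \ A2.1 := by
            rw [← hD]
            intro hxD
            exact (Finset.mem_sdiff.1 hxD).2 hx
          by_contra hc
          exact hxD (Finset.mem_sdiff.2 ⟨hxB, hc⟩)
        · rw [A.2, A2.2]
      have hA2' : A2 = A := Subtype.ext hA2.symm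
      rw [hA2'] at he2
      exact he2
    -- dispatch by shapes
    rcases subsetGraph_adj_shape hadj with ⟨A, B', rfl, rfl⟩ | ⟨A, B', rfl, rfl⟩
    · exact key A B' hu hw ((subsetGraph_adj_inl_inr hkl A B').1 hadj)
    · have := key A B' hw hu ((subsetGraph_adj_inl_inr hkl A B').1 hadj.symm)
      rw [Sym2.eq_swap] at this
      exact this

end Upper

section Bridge

lemma IsStrongMatching.semistrong {G : SimpleGraph V} {M : Set (Sym2 V)}
    (h : IsStrongMatching G M) : IsSemistrongMatching G M := by
  obtain ⟨hm, hs⟩ := h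
  refine ⟨hm, ?_⟩
  intro e he
  have heE : e ∈ G.edgeSet := hm.1 he
  revert he heE
  induction e using Sym2.ind with
  | _ u v =>
    intro he heE
    have huv : G.Adj u v := heE
    refine ⟨u, v, rfl, ?_⟩
    intro w hw hadj
    have huM : u ∈ edgeVerts M := ⟨s(u,v), he, by simp⟩
    have hmem : s(u,w) ∈ M := hs u huM w hw hadj
    have heq : s(u,v) = s(u,w) := by
      by_contra hne
      exact hm.2 _ he _ hmem hne u (by simp) (by simp)
    exact (Sym2.congr_right.1 heq).symm

lemma hasStrong_to_semistrong {G : SimpleGraph V} {t : ℕ}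
    (h : HasStrongEdgeColoring G t) : HasSemistrongEdgeColoring G t := by
  obtain ⟨c, hc, hcl⟩ := h
  exact ⟨c, hc, fun i => (hcl i).semistrong⟩

end Bridge

section UpperMain

variable {n k l : ℕ}

lemma hasStrong_subsetGraph (hkl : k ≤ l) :
    HasStrongEdgeColoring (subsetGraph n k l) (n.choose (l - k)) :=
  ⟨subsetCol n k l, fun _ he => subsetCol_lt hkl he,
    fun i => subsetGraph_strong_classes hkl i⟩

end UpperMain

section Lower

variable {n k l : ℕ}

lemma lower_bound (hkl : k ≤ l) (hln : l ≤ n) {t : ℕ}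
    (h : HasSemistrongEdgeColoring (subsetGraph n k l) t) :
    n.choose (l - k) ≤ t := by
  classical
  obtain ⟨c, hlt, hclass⟩ := h
  set G := subsetGraph n k l with hG
  set P : Finset ({s : Finset (Fin n) // s.card = k} × {s : Finset (Fin n) // s.card = l}) :=
    Finset.univ.filter (fun p => p.1.1 ⊆ p.2.1) with hP
  set ed : ({s : Finset (Fin n) // s.card = k} × {s : Finset (Fin n) // s.card = l}) → Sym2 _ :=
    fun p => s(Sum.inl p.1, Sum.inr p.2) with hed
  have hPsub : ∀ p ∈ P, p.1.1 ⊆ p.2.1 := by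
    intro p hp
    exact (Finset.mem_filter.1 hp).2
  have hedmem : ∀ p ∈ P, ed p ∈ G.edgeSet := by
    intro p hp
    exact (subsetGraph_adj_inl_inr hkl p.1 p.2).2 (hPsub p hp)
  -- counting P
  have hPcard : P.card = n.choose l * l.choose k := by
    rw [Finset.card_eq_sum_card_fiberwise (f := fun p => p.2)
      (t := Finset.univ) (fun p _ => Finset.mem_univ _)]
    have hfib : ∀ B : {s : Finset (Fin n) // s.card = l},
        (P.filter (fun p => p.2 = B)).card = l.choose k := by
      intro B
      have hcp : (Finset.powersetCard k B.1).card = l.choose k := by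
        rw [Finset.card_powersetCard, B.2]
      rw [← hcp]
      apply Finset.card_bij (fun p _ => p.1.1)
      · intro p hp
        rw [Finset.mem_filter] at hp
        apply Finset.mem_powersetCard.2
        refine ⟨?_, p.1.2⟩
        have := hPsub p hp.1
        rw [hp.2] at this
        exact this
      · intro p hp p' hp' hpp
        rw [Finset.mem_filter] at hp hp'
        have h1 : p.1 = p'.1 := Subtype.ext hpp
        have h2 : p.2 = p'.2 := by rw [hp.2, hp'.2]
        exact Prod.ext h1 h2
      · intro S hS
        rw [Finset.mem_powersetCard] at hS
        refine ⟨(⟨S, hS.2⟩, B), ?_, rfl⟩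
        rw [Finset.mem_filter]
        exact ⟨Finset.mem_filter.2 ⟨Finset.mem_univ _, hS.1⟩, rfl⟩
    rw [Finset.sum_congr rfl (fun B _ => hfib B), Finset.sum_const, Finset.card_univ]
    have : Fintype.card {s : Finset (Fin n) // s.card = l} = n.choose l := by
      rw [Fintype.card_finset_len, Fintype.card_fin]
    rw [this, smul_eq_mul]
  -- fiberwise by colors
  have hPfib : P.card = ∑ i ∈ Finset.range t, (P.filter (fun p => c (ed p) = i)).card := by
    apply Finset.card_eq_sum_card_fiberwise
    intro p hp
    exact Finset.mem_range.2 (hlt _ (hedmem p hp))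
  -- each color fiber is small
  have hfible : ∀ i : ℕ, (P.filter (fun p => c (ed p) = i)).card ≤ (k + (n - l)).choose k := by
    intro i
    set F := P.filter (fun p => c (ed p) = i) with hF
    have hFP : ∀ q : ↥F, q.1 ∈ P ∧ c (ed q.1) = i := by
      intro q
      exact Finset.mem_filter.1 q.2
    have hedM : ∀ q : ↥F, ed q.1 ∈ {e | e ∈ G.edgeSet ∧ c e = i} := by
      intro q
      exact ⟨hedmem q.1 (hFP q).1, (hFP q).2⟩
    have hmatch := (hclass i).1
    -- key: derive hLR
    have hLR : ∀ p : ↥F, (∀ q : ↥F, p.1.1.1 ⊆ q.1.2.1 → q = p) ∨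
        (∀ q : ↥F, q.1.1.1 ⊆ p.1.2.1 → q = p) := by
      intro p
      obtain ⟨u, v, heq, hdeg⟩ := (hclass i).2 (ed p.1) (hedM p)
      have heqc := heq
      simp only [hed] at heqc
      rw [Sym2.eq_iff] at heqc
      have edeq : ∀ q : ↥F, ed q.1 = ed p.1 → q = p := by
        intro q hq
        simp only [hed] at hq
        rw [Sym2.eq_iff] at hq
        rcases hq with ⟨h1, h2⟩ | ⟨h1, _⟩
        · exact Subtype.ext (Prod.ext (Sum.inl.inj h1) (Sum.inr.inj h2))
        · exact absurd h1 (by simp)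
      rcases heqc with ⟨hu, hv⟩ | ⟨hu, hv⟩
      · left
        intro q hsub
        have hwE : Sum.inr q.1.2 ∈ edgeVerts {e | e ∈ G.edgeSet ∧ c e = i} :=
          ⟨ed q.1, hedM q, by simp [hed]⟩
        have hadj : G.Adj u (Sum.inr q.1.2) := by
          rw [← hu]
          exact (subsetGraph_adj_inl_inr hkl p.1.1 q.1.2).2 hsub
        have := hdeg _ hwE hadj
        rw [← hv] at this
        have hB : q.1.2 = p.1.2 := Sum.inr.inj this
        apply edeq
        by_contra hne
        apply hmatch.2 _ (hedM q) _ (hedM p) hne (Sum.inr p.1.2)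
        · simp [hed, hB]
        · simp [hed]
      · right
        intro q hsub
        have hwE : Sum.inl q.1.1 ∈ edgeVerts {e | e ∈ G.edgeSet ∧ c e = i} :=
          ⟨ed q.1, hedM q, by simp [hed]⟩
        have hadj : G.Adj u (Sum.inl q.1.1) := by
          rw [← hv]
          exact ((subsetGraph_adj_inl_inr hkl q.1.1 p.1.2).2 hsub).symm
        have := hdeg _ hwE hadj
        rw [← hu] at this
        have hA : q.1.1 = p.1.1 := Sum.inl.inj this
        apply edeq
        by_contra hne
        apply hmatch.2 _ (hedM q) _ (hedM p) hne (Sum.inl p.1.1)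
        · simp [hed, hA]
        · simp [hed]
    have := card_le_choose_of_LR (ι := ↥F) (fun q => q.1.1.1) (fun q => q.1.2.1)
      (fun q => q.1.1.2)
      (fun q => by
        rw [Finset.card_sdiff_of_subset (Finset.subset_univ _), Finset.card_univ, Fintype.card_fin, q.1.2.2])
      (fun q => hPsub q.1 (hFP q).1)
      hLR
    rwa [Fintype.card_coe] at this
  -- put it together
  have hineq : n.choose l * l.choose k ≤ t * (k + (n - l)).choose k := by
    rw [← hPcard, hPfib]
    calc ∑ i ∈ Finset.range t, (P.filter (fun p => c (ed p) = i)).card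
        ≤ ∑ _i ∈ Finset.range t, (k + (n - l)).choose k :=
          Finset.sum_le_sum (fun i _ => hfible i)
      _ = t * (k + (n - l)).choose k := by rw [Finset.sum_const, Finset.card_range, smul_eq_mul]
  have hid : n.choose l * l.choose k = n.choose (l - k) * (k + (n - l)).choose k := by
    have h1 : l.choose k = l.choose (l - k) := (Nat.choose_symm hkl).symm
    have h2 := Nat.choose_mul (n := n) (Nat.sub_le l k)
    have h3 : n - (l - k) = k + (n - l) := by omega
    have h4 : l - (l - k) = k := by omega
    rw [h1, h2, h3, h4]
  rw [hid] at hineq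
  exact Nat.le_of_mul_le_mul_right hineq (Nat.choose_pos (Nat.le_add_right _ _))

end Lower

end Proofs

/-- For all integers `0 ≤ k ≤ ℓ ≤ n`, the strong chromatic index and the
semistrong chromatic index of the subset graph `S_n(k,ℓ)` are both equal
to `C(n, ℓ-k)`. -/
theorem chromIdx_subsetGraph (n k l : ℕ) (hkl : k ≤ l) (hln : l ≤ n) :
    strongChromIdx (subsetGraph n k l) = n.choose (l - k) ∧
    ssChromIdx (subsetGraph n k l) = n.choose (l - k) := by
  have hub := hasStrong_subsetGraph (n := n) hkl
  have hubss := hasStrong_to_semistrong hub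
  constructor
  · apply le_antisymm
    · exact Nat.sInf_le hub
    · exact le_csInf ⟨_, hub⟩ (fun b hb => lower_bound hkl hln (hasStrong_to_semistrong hb))
  · apply le_antisymm
    · exact Nat.sInf_le hubss
    · exact le_csInf ⟨_, hubss⟩ (fun b hb => lower_bound hkl hln hb)
end
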